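/- Let P be a partition of T into three simply connected districts and let w ∈ P_i be a cut vertex of P_i. Then every connected component S of P_i \ {w} contains an exposed vertex x such that P_i \ {x} is simply connected. -/

import Mathlib

namespace Redistrict

/-!
Common definitions: the triangular lattice `G_Δ`, the triangular region `T` of side
length `n`, simply connected sets, partitions into three simply connected districts,
recombination moves, the state space `Ω` and the graph `G_Ω`.
-/

/-- The infinite triangular lattice graph `G_Δ` on `ℤ²`: two vertices are adjacent iff
their difference is one of `(1,0),(-1,0),(0,1),(0,-1),(1,-1),(-1,1)`. -/
def TriLattice : SimpleGraph (ℤ × ℤ) :=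
  SimpleGraph.fromRel (fun v w => v - w = (1, 0) ∨ v - w = (0, 1) ∨ v - w = (1, -1))

/-- The triangular region `T` of side length `n`, oriented with a vertical right edge:
column `x` (for `1 ≤ x ≤ n`) consists of the `x` vertices `(x, y)` with `1 - x ≤ y ≤ 0`.
It has `n (n+1) / 2` vertices, `n` on each side. -/
def Tset (n : ℕ) : Set (ℤ × ℤ) :=
  {p | 1 ≤ p.1 ∧ p.1 ≤ (n : ℤ) ∧ 1 - p.1 ≤ p.2 ∧ p.2 ≤ 0}

/-- The neighborhood `N(v)` of a vertex of the triangular lattice. -/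
def nbhd (v : ℤ × ℤ) : Set (ℤ × ℤ) := {w | TriLattice.Adj v w}

/-- The boundary `bd(T)`: vertices of `T` adjacent to some vertex outside `T`. -/
def bdT (n : ℕ) : Set (ℤ × ℤ) :=
  {v ∈ Tset n | ∃ w, TriLattice.Adj v w ∧ w ∉ Tset n}

/-- A corner of `T`: a vertex of `T` with exactly two neighbors in `T`. -/
def IsCorner (n : ℕ) (v : ℤ × ℤ) : Prop :=
  v ∈ Tset n ∧ (nbhd v ∩ Tset n).ncard = 2

/-- The subgraph of `G_Δ` induced on `S` is connected. -/
def ConnSet (S : Set (ℤ × ℤ)) : Prop := (TriLattice.induce S).Connected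

/-- A set of vertices is simply connected if it induces a connected subgraph of `G_Δ`
and its complement induces a connected subgraph of `G_Δ`. -/
def SimplyConn (S : Set (ℤ × ℤ)) : Prop := ConnSet S ∧ ConnSet Sᶜ

/-- A partition of `T` (of side length `n`) into three simply connected districts
`P 0`, `P 1`, `P 2` (the paper's `P_1, P_2, P_3`). -/
structure TriPartition (n : ℕ) where
  P : Fin 3 → Set (ℤ × ℤ)
  disj : ∀ i j : Fin 3, i ≠ j → Disjoint (P i) (P j)
  cover : (⋃ i, P i) = Tset n
  sc : ∀ i, SimplyConn (P i)

/-- A recombination move: the two partitions differ, and some district of one is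
identical to some district of the other. -/
def RecombMove {n : ℕ} (σ τ : TriPartition n) : Prop :=
  σ ≠ τ ∧ ∃ i j : Fin 3, σ.P i = τ.P j

/-- A partition is balanced (w.r.t. ideal sizes `k`) if `|P_i| = k_i` for each `i`. -/
def IsBalanced {n : ℕ} (k : Fin 3 → ℕ) (σ : TriPartition n) : Prop :=
  ∀ i, (σ.P i).ncard = k i

/-- `k_i - 1 ≤ |P_i| ≤ k_i + 1` for each `i`, i.e. balanced or nearly balanced. -/
def InOmega {n : ℕ} (k : Fin 3 → ℕ) (σ : TriPartition n) : Prop :=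
  ∀ i, k i ≤ (σ.P i).ncard + 1 ∧ (σ.P i).ncard ≤ k i + 1

/-- A partition is nearly balanced if it is not balanced but
`k_i - 1 ≤ |P_i| ≤ k_i + 1` for each `i`. -/
def NearlyBalanced {n : ℕ} (k : Fin 3 → ℕ) (σ : TriPartition n) : Prop :=
  ¬ IsBalanced k σ ∧ InOmega k σ

lemma IsBalanced.inOmega {n : ℕ} {k : Fin 3 → ℕ} {σ : TriPartition n}
    (h : IsBalanced k σ) : InOmega k σ := fun i => by have := h i; omega

/-- The state space `Ω` of all balanced and nearly balanced partitions. -/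
abbrev Omega (n : ℕ) (k : Fin 3 → ℕ) : Type := {σ : TriPartition n // InOmega k σ}

/-- The graph `G_Ω` on `Ω` whose edges are the recombination moves. -/
def GOmega (n : ℕ) (k : Fin 3 → ℕ) : SimpleGraph (Omega n k) where
  Adj σ τ := RecombMove σ.val τ.val
  symm := by
    constructor
    intro σ τ h
    obtain ⟨hne, i, j, hij⟩ := h
    exact ⟨Ne.symm hne, j, i, hij.symm⟩
  loopless := by
    constructor
    intro σ h
    obtain ⟨hne, -⟩ := h
    exact hne rfl

/-- The columns of `T`: `colEq n i` is the `i`-th column `C_i` (vertices with first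
coordinate `i`), and `colLT`, `colLE`, `colGT` are `C_{<i}`, `C_{≤i}`, `C_{>i}`. -/
def colEq (n i : ℕ) : Set (ℤ × ℤ) := {p ∈ Tset n | p.1 = (i : ℤ)}

def colLT (n i : ℕ) : Set (ℤ × ℤ) := {p ∈ Tset n | p.1 < (i : ℤ)}

def colLE (n i : ℕ) : Set (ℤ × ℤ) := {p ∈ Tset n | p.1 ≤ (i : ℤ)}

def colGT (n i : ℕ) : Set (ℤ × ℤ) := {p ∈ Tset n | (i : ℤ) < p.1}

/-- The single leftmost vertex `C_1` of `T`. -/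
def c1 : ℤ × ℤ := (1, 0)

/-- A vertex of `P_i` is exposed if it is adjacent to a vertex of `T` in another district. -/
def Exposed {n : ℕ} (σ : TriPartition n) (i : Fin 3) (v : ℤ × ℤ) : Prop :=
  v ∈ σ.P i ∧ ∃ w ∈ Tset n, TriLattice.Adj v w ∧ w ∉ σ.P i

/-- `S` is a connected component of `A`: a nonempty maximal connected subset of `A`. -/
def IsCompOf (S A : Set (ℤ × ℤ)) : Prop :=
  S.Nonempty ∧ S ⊆ A ∧ ConnSet S ∧ ∀ S', S ⊆ S' → S' ⊆ A → ConnSet S' → S' = S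

/-- Reassigning the vertex `v` to district `j` (removing it from the other districts)
yields again a partition of `T` into three simply connected districts. -/
def FlipTo {n : ℕ} (σ : TriPartition n) (v : ℤ × ℤ) (j : Fin 3) : Prop :=
  ∃ τ : TriPartition n, τ.P j = σ.P j ∪ {v} ∧ ∀ l, l ≠ j → τ.P l = σ.P l \ {v}

/-- `τ` is obtained from `σ` by reassigning the single vertex `v` to a new district. -/
def FlipMove {n : ℕ} (σ τ : TriPartition n) (v : ℤ × ℤ) : Prop :=
  ∃ j : Fin 3, v ∉ σ.P j ∧ τ.P j = σ.P j ∪ {v} ∧ ∀ l, l ≠ j → τ.P l = σ.P l \ {v}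

/-- A subset `S` of `P_i` is shrinkable if it contains a vertex that can be removed
from `P_i` and added to a different district, producing a valid partition. -/
def Shrinkable {n : ℕ} (σ : TriPartition n) (i : Fin 3) (S : Set (ℤ × ℤ)) : Prop :=
  ∃ x ∈ S, ∃ j : Fin 3, j ≠ i ∧ FlipTo σ x j

/-- The six unit directions of the triangular lattice. -/
def triDir (d : ℤ × ℤ) : Prop :=
  d = (1, 0) ∨ d = (-1, 0) ∨ d = (0, 1) ∨ d = (0, -1) ∨ d = (1, -1) ∨ d = (-1, 1)

/-- The `l`-th vertex (1-indexed) on the lattice line through `base` with direction `dir`. -/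
def towerVtx (base dir : ℤ × ℤ) (l : ℕ) : ℤ × ℤ := base + ((l : ℤ) - 1) • dir

/-- A tower for the partition `σ`: a sequence `v_1, …, v_t` (`t ≥ 2`) of consecutive
vertices on a straight lattice line such that `v_1` is in the same district as both common
neighbors of `v_1` and `v_2`; no two consecutive tower vertices are in the same district;
for `2 ≤ l ≤ t`, moving `v_l` to the district of `v_{l-1}` does not yield a valid
partition; and the next vertex `v_{t+1}` on the line cannot be appended to the tower. -/
structure Tower (n : ℕ) (σ : TriPartition n) where
  t : ℕ
  base : ℤ × ℤ
  dir : ℤ × ℤ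
  dst : ℕ → Fin 3
  two_le : 2 ≤ t
  dir_mem : triDir dir
  mem : ∀ l, 1 ≤ l → l ≤ t → towerVtx base dir l ∈ σ.P (dst l)
  top : ∀ u, TriLattice.Adj u (towerVtx base dir 1) →
      TriLattice.Adj u (towerVtx base dir 2) → u ∈ σ.P (dst 1)
  alt : ∀ l, 1 ≤ l → l < t → dst l ≠ dst (l + 1)
  stuck : ∀ l, 2 ≤ l → l ≤ t → ¬ FlipTo σ (towerVtx base dir l) (dst (l - 1))
  maximal : ¬ ∃ c : Fin 3, towerVtx base dir (t + 1) ∈ σ.P c ∧ c ≠ dst t ∧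
      ¬ FlipTo σ (towerVtx base dir (t + 1)) (dst t)

/-- A parametrization of the boundary cycle of `T` (of side length `n`), of period
`3(n-1)`: it runs along the top edge, then the right vertical edge, then the hypotenuse. -/
def bdCycleFun (n : ℕ) (t : ℤ) : ℤ × ℤ :=
  let m : ℤ := 3 * ((n : ℤ) - 1)
  let s : ℤ := t % m
  if s < (n : ℤ) - 1 then (1 + s, 0)
  else if s < 2 * ((n : ℤ) - 1) then ((n : ℤ), ((n : ℤ) - 1) - s)
  else (3 * ((n : ℤ) - 1) + 1 - s, 1 - (3 * ((n : ℤ) - 1) + 1 - s))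

/-- A vertex is enclosed by (the vertex set of) a cycle `C` if it is not on `C` and the set
of vertices reachable from it in the lattice avoiding `C` is finite, i.e. it lies in the
bounded region of the plane determined by `C`. -/
def Enclosed (C : Set (ℤ × ℤ)) (u : ℤ × ℤ) : Prop :=
  ∃ hu : u ∈ Cᶜ,
    {w : ℤ × ℤ | ∃ hw : w ∈ Cᶜ, (TriLattice.induce Cᶜ).Reachable ⟨u, hu⟩ ⟨w, hw⟩}.Finite

/-- `N_C(y)`: the neighbors of `y` lying on or inside the cycle with vertex set `C`. -/
def cycNbhd (C : Set (ℤ × ℤ)) (y : ℤ × ℤ) : Set (ℤ × ℤ) :=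
  {w | TriLattice.Adj y w ∧ (w ∈ C ∨ Enclosed C w)}

/-- A triangular face: three mutually adjacent vertices. -/
def TriFace (a b c : ℤ × ℤ) : Prop :=
  TriLattice.Adj a b ∧ TriLattice.Adj b c ∧ TriLattice.Adj a c

/-- Twice the signed area of the triangle `a b c`; its sign gives the orientation
(clockwise vs. counterclockwise) of the triple in the planar embedding. -/
def detOr (a b c : ℤ × ℤ) : ℤ :=
  (b.1 - a.1) * (c.2 - a.2) - (b.2 - a.2) * (c.1 - a.1)

/-- The six directions in cyclic order. -/
def D : Fin 6 → ℤ × ℤ := ![(1,0),(1,-1),(0,-1),(-1,0),(-1,1),(0,1)]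

@[simp] lemma D0 : D 0 = (1,0) := rfl
@[simp] lemma D1 : D 1 = (1,-1) := rfl
@[simp] lemma D2 : D 2 = (0,-1) := rfl
@[simp] lemma D3 : D 3 = (-1,0) := rfl
@[simp] lemma D4 : D 4 = (-1,1) := rfl
@[simp] lemma D5 : D 5 = (0,1) := rfl

lemma adj_iff {v w : ℤ × ℤ} : TriLattice.Adj v w ↔ ∃ k : Fin 6, w = v + D k := by
  constructor
  · rintro ⟨hne, h | h⟩
    · rcases h with h | h | h
      · exact ⟨3, by obtain ⟨h1, h2⟩ := Prod.ext_iff.mp h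
                     simp [Prod.ext_iff] at *; omega⟩
      · exact ⟨2, by obtain ⟨h1, h2⟩ := Prod.ext_iff.mp h
                     simp [Prod.ext_iff] at *; omega⟩
      · exact ⟨4, by obtain ⟨h1, h2⟩ := Prod.ext_iff.mp h
                     simp [Prod.ext_iff] at *; omega⟩
    · rcases h with h | h | h
      · exact ⟨0, by obtain ⟨h1, h2⟩ := Prod.ext_iff.mp h
                     simp [Prod.ext_iff] at *; omega⟩
      · exact ⟨5, by obtain ⟨h1, h2⟩ := Prod.ext_iff.mp h
                     simp [Prod.ext_iff] at *; omega⟩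
      · exact ⟨1, by obtain ⟨h1, h2⟩ := Prod.ext_iff.mp h
                     simp [Prod.ext_iff] at *; omega⟩
  · rintro ⟨k, rfl⟩
    refine ⟨?_, ?_⟩
    · fin_cases k <;> simp [Prod.ext_iff]
    · fin_cases k <;> simp [Prod.ext_iff]

lemma adj_dirs (v : ℤ × ℤ) (k : Fin 6) : TriLattice.Adj v (v + D k) :=
  adj_iff.mpr ⟨k, rfl⟩

lemma adj_consec (v : ℤ × ℤ) (k : Fin 6) :
    TriLattice.Adj (v + D k) (v + D (k + 1)) := by
  rw [adj_iff]
  fin_cases k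
  · exact ⟨2, by simp [Prod.ext_iff]⟩
  · exact ⟨3, by simp [Prod.ext_iff]⟩
  · exact ⟨4, by simp [Prod.ext_iff]⟩
  · exact ⟨5, by simp [Prod.ext_iff]⟩
  · exact ⟨0, by simp [Prod.ext_iff]⟩
  · exact ⟨1, by simp [Prod.ext_iff]⟩

lemma adj_symm' {v w : ℤ × ℤ} (h : TriLattice.Adj v w) : TriLattice.Adj w v := h.symm

/-- Reachability within a set `S` by lattice steps. -/
def RTo (S : Set (ℤ × ℤ)) : ℤ × ℤ → ℤ × ℤ → Prop :=
  Relation.ReflTransGen (fun a b => a ∈ S ∧ b ∈ S ∧ TriLattice.Adj a b)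

lemma RTo.refl {S : Set (ℤ × ℤ)} (a : ℤ × ℤ) : RTo S a a := Relation.ReflTransGen.refl

lemma RTo.single {S : Set (ℤ × ℤ)} {a b : ℤ × ℤ} (ha : a ∈ S) (hb : b ∈ S)
    (h : TriLattice.Adj a b) : RTo S a b := Relation.ReflTransGen.single ⟨ha, hb, h⟩

lemma RTo.trans {S : Set (ℤ × ℤ)} {a b c : ℤ × ℤ} (h : RTo S a b) (h' : RTo S b c) :
    RTo S a c := Relation.ReflTransGen.trans h h'

lemma RTo.symm {S : Set (ℤ × ℤ)} {a b : ℤ × ℤ} (h : RTo S a b) : RTo S b a := by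
  induction h with
  | refl => exact RTo.refl a
  | tail _ hbc ih => exact RTo.trans (RTo.single hbc.2.1 hbc.1 hbc.2.2.symm) ih

lemma RTo.mono {S S' : Set (ℤ × ℤ)} (hss : S ⊆ S') {a b : ℤ × ℤ} (h : RTo S a b) :
    RTo S' a b := by
  induction h with
  | refl => exact RTo.refl a
  | tail _ hbc ih => exact RTo.trans ih (RTo.single (hss hbc.1) (hss hbc.2.1) hbc.2.2)

lemma RTo.mem_right {S : Set (ℤ × ℤ)} {a b : ℤ × ℤ} (h : RTo S a b) (ha : a ∈ S) :
    b ∈ S := by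
  induction h with
  | refl => exact ha
  | tail _ hbc _ => exact hbc.2.1

lemma reachable_of_rto {S : Set (ℤ × ℤ)} {a b : ℤ × ℤ} (h : RTo S a b) :
    ∀ (ha : a ∈ S) (hb : b ∈ S),
      (TriLattice.induce S).Reachable ⟨a, ha⟩ ⟨b, hb⟩ := by
  induction h with
  | refl => exact fun _ _ => SimpleGraph.Reachable.refl _
  | @tail b c _ hbc ih =>
      intro ha hc
      exact SimpleGraph.Reachable.trans (ih ha hbc.1)
        (SimpleGraph.Adj.reachable (by exact hbc.2.2))

lemma rto_of_reachable {S : Set (ℤ × ℤ)} {a b : S}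
    (h : (TriLattice.induce S).Reachable a b) : RTo S a.1 b.1 := by
  obtain ⟨w⟩ := h
  induction w with
  | nil => exact RTo.refl _
  | @cons u v _ huv _ ih =>
      exact RTo.trans (RTo.single u.2 v.2 huv) ih

lemma connSet_iff {S : Set (ℤ × ℤ)} :
    ConnSet S ↔ S.Nonempty ∧ ∀ a ∈ S, ∀ b ∈ S, RTo S a b := by
  constructor
  · intro h
    refine ⟨Set.nonempty_coe_sort.mp h.nonempty, fun a ha b hb => ?_⟩
    exact rto_of_reachable (h.preconnected ⟨a, ha⟩ ⟨b, hb⟩)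
  · rintro ⟨⟨x, hx⟩, h⟩
    have : Nonempty ↥S := ⟨⟨x, hx⟩⟩
    refine ⟨fun a b => ?_⟩
    exact reachable_of_rto (h a.1 a.2 b.1 b.2) a.2 b.2

/-- Connectivity via a hub. -/
lemma connSet_of_hub {S : Set (ℤ × ℤ)} {h0 : ℤ × ℤ} (hh : h0 ∈ S)
    (h : ∀ a ∈ S, RTo S a h0) : ConnSet S := by
  refine connSet_iff.mpr ⟨⟨h0, hh⟩, fun a ha b hb => ?_⟩
  exact RTo.trans (h a ha) (RTo.symm (h b hb))

/-- Adding a vertex adjacent to a connected set keeps it connected. -/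
lemma connSet_union_singleton {S : Set (ℤ × ℤ)} {s v : ℤ × ℤ} (hc : ConnSet S)
    (hs : s ∈ S) (hadj : TriLattice.Adj s v) : ConnSet (S ∪ {v}) := by
  obtain ⟨-, hr⟩ := connSet_iff.mp hc
  refine connSet_of_hub (h0 := s) (Or.inl hs) ?_
  rintro a (ha | ha)
  · exact RTo.mono Set.subset_union_left (hr a ha s hs)
  · cases ha
    exact RTo.single (Or.inr rfl) (Or.inl hs) hadj.symm


lemma reach_cross {U S : Set (ℤ × ℤ)} {u v : ℤ × ℤ} (h : RTo U u v) (hu : u ∈ S)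
    (hv : v ∉ S) : ∃ a ∈ S, ∃ b ∈ U, b ∉ S ∧ TriLattice.Adj a b := by
  induction h using Relation.ReflTransGen.head_induction_on with
  | refl => exact absurd hu hv
  | head hac _ ih =>
      rename_i a c _
      by_cases hc : c ∈ S
      · exact ih hc
      · exact ⟨a, hu, c, hac.2.1, hc, hac.2.2⟩

lemma reach_avoid {U S : Set (ℤ × ℤ)} {u v : ℤ × ℤ} (h : RTo U u v) (hu : u ∉ S)
    (hcl : ∀ a ∈ S, ∀ b ∈ U, TriLattice.Adj a b → b ∈ S ∨ b = v) :
    RTo (U \ S) u v := by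
  revert hu
  induction h using Relation.ReflTransGen.head_induction_on with
  | refl => exact fun _ => RTo.refl v
  | head hac hcv ih =>
      rename_i a c
      intro hu
      by_cases hc : c ∈ S
      · have := hcl c hc a hac.1 hac.2.2.symm
        rcases this with ha | hav
        · exact absurd ha hu
        · rw [hav]; exact RTo.refl v
      · exact RTo.trans (RTo.single ⟨hac.1, hu⟩ ⟨hac.2.1, hc⟩ hac.2.2) (ih hc)

lemma tset_finite (n : ℕ) : (Tset n).Finite := by
  apply Set.Finite.subset (Set.finite_Icc ((1 : ℤ), (1 - (n : ℤ))) ((n : ℤ), (0 : ℤ)))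
  rintro ⟨x, y⟩ ⟨h1, h2, h3, h4⟩
  simp only [Set.mem_Icc, Prod.mk_le_mk] at *
  constructor <;> constructor <;> omega

lemma tset_rto_c1 {n : ℕ} : ∀ p ∈ Tset n, RTo (Tset n) p ((1 : ℤ), (0 : ℤ)) := by
  have vert : ∀ k : ℕ, ∀ x y : ℤ, (x, y) ∈ Tset n → y = -(k : ℤ) →
      RTo (Tset n) (x, y) (x, 0) := by
    intro k
    induction k with
    | zero => intro x y h hy; subst hy; simpa using RTo.refl (S := Tset n) (x, 0)
    | succ m ih =>
        intro x y h hy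
        have hy1 : (x, y + 1) ∈ Tset n := by
          obtain ⟨h1, h2, h3, h4⟩ := h
          exact ⟨h1, h2, by simp at *; omega, by simp at *; omega⟩
        have step : RTo (Tset n) (x, y) (x, y + 1) :=
          RTo.single h hy1 (by simpa using adj_dirs (x, y) 5)
        exact RTo.trans step (ih x (y + 1) hy1 (by omega))
  have horiz : ∀ k : ℕ, ∀ x : ℤ, (x, 0) ∈ Tset n → x = 1 + (k : ℤ) →
      RTo (Tset n) (x, 0) (1, 0) := by
    intro k
    induction k with
    | zero => intro x h hx; subst hx; simpa using RTo.refl (S := Tset n) ((1 : ℤ), (0 : ℤ))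
    | succ m ih =>
        intro x h hx
        have hx1 : (x - 1, 0) ∈ Tset n := by
          obtain ⟨h1, h2, h3, h4⟩ := h
          exact ⟨by simp at *; omega, by simp at *; omega, by simp at *; omega, le_refl _⟩
        have step : RTo (Tset n) (x, 0) (x - 1, 0) :=
          RTo.single h hx1 (by
            have := adj_dirs (x, 0) 3
            simpa [sub_eq_add_neg] using this)
        exact RTo.trans step (ih (x - 1) hx1 (by omega))
  rintro ⟨x, y⟩ h
  obtain ⟨h1, h2, h3, h4⟩ := h
  have h0 : (x, (0 : ℤ)) ∈ Tset n := ⟨h1, h2, by simp at *; omega, le_refl _⟩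
  refine RTo.trans (vert (-y).toNat x y ⟨h1, h2, h3, h4⟩ (by simp at *; omega)) ?_
  exact horiz (x - 1).toNat x h0 (by simp at *; omega)

/-- In a connected `T`, any proper nonempty subset has a crossing edge. -/
lemma tset_cross {n : ℕ} {A : Set (ℤ × ℤ)} (hA : A ⊆ Tset n) {a0 q : ℤ × ℤ}
    (ha0 : a0 ∈ A) (hq : q ∈ Tset n) (hqA : q ∉ A) :
    ∃ a ∈ A, ∃ b ∈ Tset n, b ∉ A ∧ TriLattice.Adj a b := by
  have h1 : RTo (Tset n) a0 q :=
    RTo.trans (tset_rto_c1 a0 (hA ha0)) (RTo.symm (tset_rto_c1 q hq))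
  exact reach_cross h1 ha0 hqA



lemma hexMid {n : ℕ} (v : ℤ × ℤ) (k : Fin 6) (h1 : v + D (k + 5) ∈ Tset n)
    (h2 : v + D (k + 1) ∈ Tset n) : v + D k ∈ Tset n := by
  obtain ⟨x, y⟩ := v
  fin_cases k <;>
    · obtain ⟨a1, a2, a3, a4⟩ := h1
      obtain ⟨b1, b2, b3, b4⟩ := h2
      refine ⟨?_, ?_, ?_, ?_⟩ <;> simp at * <;> omega

lemma hexOpp {n : ℕ} (v : ℤ × ℤ) (k : Fin 6) (hv : v ∈ Tset n)
    (h1 : v + D k ∈ Tset n) (h2 : v + D (k + 3) ∈ Tset n)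
    (g1 : v + D (k + 1) ∉ Tset n) (g2 : v + D (k + 2) ∉ Tset n)
    (g3 : v + D (k + 4) ∉ Tset n) (g4 : v + D (k + 5) ∉ Tset n) : False := by
  obtain ⟨x, y⟩ := v
  obtain ⟨v1, v2, v3, v4⟩ := hv
  simp only [Tset, Set.mem_setOf_eq, not_and, not_le] at *
  fin_cases k <;> simp at * <;> omega

set_option maxRecDepth 100000 in
lemma hexCombi : ∀ f g : Fin 6 → Bool,
    (∀ k, ¬(f k = true ∧ g k = true)) →
    (∀ k, ((f (k + 5) || g (k + 5)) = true → (f (k + 1) || g (k + 1)) = true →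
      (f k || g k) = true)) →
    (∃ k, f k = true) → (∃ k, g k = true) →
    (∀ k, ¬(f k = true ∧ g (k + 1) = true) ∧ ¬(g k = true ∧ f (k + 1) = true)) →
    ∃ k : Fin 6, (f k || g k) = true ∧ (f (k + 3) || g (k + 3)) = true ∧
      ∀ j, j ≠ k → j ≠ k + 3 → (f j || g j) = false := by
  unfold Not
  decide



lemma Dk_ne_zero : ∀ k : Fin 6, D k ≠ 0 := by decide

lemma add_D_ne (p : ℤ × ℤ) (k : Fin 6) : p + D k ≠ p := by
  intro h
  have : D k = 0 := by
    have := congrArg (fun q => q - p) h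
    simpa [add_comm, add_sub_cancel_left] using this
  exact Dk_ne_zero k this

lemma expose_exists {n : ℕ} {P A : Set (ℤ × ℤ)} (hPT : P ⊆ Tset n) (hAP : A ⊆ P)
    {p : ℤ × ℤ} (hpP : p ∈ P) (hpA : p ∉ A)
    (hadj : ∃ a ∈ A, TriLattice.Adj p a)
    (hcl : ∀ a ∈ A, ∀ b ∈ Tset n, TriLattice.Adj a b → b ∈ P → b ∈ A ∨ b = p)
    {q : ℤ × ℤ} (hq : q ∈ Tset n) (hqP : q ∉ P) :
    ∃ x ∈ A, ∃ b ∈ Tset n, TriLattice.Adj x b ∧ b ∉ P := by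
  classical
  by_contra hcon
  push_neg at hcon
  -- every T-neighbor of A is in A ∪ {p}
  have hcl' : ∀ a ∈ A, ∀ b ∈ Tset n, TriLattice.Adj a b → b ∈ A ∨ b = p := by
    intro a ha b hb hab
    exact hcl a ha b hb hab (hcon a ha b hb hab)
  -- crossing edge out of A ∪ {p}
  have hsub : A ∪ {p} ⊆ Tset n := by
    rintro x (hx | hx)
    · exact hPT (hAP hx)
    · cases hx; exact hPT hpP
  have hqA : q ∉ A ∪ {p} := by
    rintro (h | h)
    · exact hqP (hAP h)
    · cases h; exact hqP hpP
  obtain ⟨a, ha, b, hbT, hbA, hab⟩ :=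
    tset_cross hsub (Or.inr rfl : p ∈ A ∪ {p}) hq hqA
  have hap : a = p := by
    rcases ha with ha | ha
    · rcases hcl' a ha b hbT hab with h | h
      · exact absurd (Or.inl h) hbA
      · exact absurd (Or.inr h) hbA
    · exact ha
  subst hap
  -- set up the hexagon around a (= p)
  set f : Fin 6 → Bool := fun k => decide (a + D k ∈ A) with hf_def
  set g : Fin 6 → Bool := fun k => decide (a + D k ∈ Tset n ∧ a + D k ∉ A) with hg_def
  have hfg : ∀ k, (f k || g k) = true ↔ a + D k ∈ Tset n := by
    intro k
    simp only [hf_def, hg_def, Bool.or_eq_true, decide_eq_true_eq]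
    constructor
    · rintro (h | h)
      · exact hPT (hAP h)
      · exact h.1
    · intro h
      by_cases hmem : a + D k ∈ A
      · exact Or.inl hmem
      · exact Or.inr ⟨h, hmem⟩
  have hdisj : ∀ k, ¬(f k = true ∧ g k = true) := by
    rintro k ⟨h1, h2⟩
    simp only [hf_def, hg_def, decide_eq_true_eq] at h1 h2
    exact h2.2 h1
  have hmid : ∀ k, (f (k + 5) || g (k + 5)) = true → (f (k + 1) || g (k + 1)) = true →
      (f k || g k) = true := by
    intro k h1 h2
    exact (hfg k).mpr (hexMid a k ((hfg (k + 5)).mp h1) ((hfg (k + 1)).mp h2))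
  have hf1 : ∃ k, f k = true := by
    obtain ⟨x, hx, hpx⟩ := hadj
    obtain ⟨k, rfl⟩ := adj_iff.mp hpx
    exact ⟨k, by simp [hf_def, hx]⟩
  have hg1 : ∃ k, g k = true := by
    obtain ⟨k, rfl⟩ := adj_iff.mp hab
    refine ⟨k, by simp [hg_def, hbT]; intro h; exact hbA (Or.inl h)⟩
  have hcross : ∀ k, ¬(f k = true ∧ g (k + 1) = true) ∧
      ¬(g k = true ∧ f (k + 1) = true) := by
    intro k
    constructor
    · rintro ⟨h1, h2⟩
      simp only [hf_def, hg_def, decide_eq_true_eq] at h1 h2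
      have hadj2 := adj_consec a k
      rcases hcl' _ h1 _ h2.1 hadj2 with h | h
      · exact h2.2 h
      · exact add_D_ne a (k + 1) h
    · rintro ⟨h1, h2⟩
      simp only [hf_def, hg_def, decide_eq_true_eq] at h1 h2
      have hadj2 := (adj_consec a k).symm
      rcases hcl' _ h2 _ h1.1 hadj2 with h | h
      · exact h1.2 h
      · exact add_D_ne a k h
  obtain ⟨k, hk1, hk2, hk3⟩ := hexCombi f g hdisj hmid hf1 hg1 hcross
  have hout : ∀ j : Fin 6, j ≠ k → j ≠ k + 3 → a + D j ∉ Tset n := by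
    intro j hj1 hj2 hmem
    have := (hfg j).mpr hmem
    rw [hk3 j hj1 hj2] at this
    exact Bool.false_ne_true this
  have e1 : ∀ k : Fin 6, k + 1 ≠ k ∧ k + 1 ≠ k + 3 ∧ k + 2 ≠ k ∧ k + 2 ≠ k + 3 ∧
      k + 4 ≠ k ∧ k + 4 ≠ k + 3 ∧ k + 5 ≠ k ∧ k + 5 ≠ k + 3 := by decide
  obtain ⟨e11, e12, e21, e22, e41, e42, e51, e52⟩ := e1 k
  exact hexOpp (n := n) a k (hPT hpP) ((hfg k).mp hk1) ((hfg (k + 3)).mp hk2)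
    (hout (k + 1) e11 e12) (hout (k + 2) e21 e22) (hout (k + 4) e41 e42)
    (hout (k + 5) e51 e52)



lemma part_subset_tset {n : ℕ} (σ : TriPartition n) (i : Fin 3) : σ.P i ⊆ Tset n := by
  rw [← σ.cover]; exact Set.subset_iUnion σ.P i

lemma part_nonempty {n : ℕ} (σ : TriPartition n) (i : Fin 3) : (σ.P i).Nonempty :=
  Set.nonempty_coe_sort.mp (σ.sc i).1.nonempty

/-- restriction of a chain to the set of points that reach the endpoint -/
lemma rto_restrict {S : Set (ℤ × ℤ)} {u v : ℤ × ℤ} (h : RTo S u v) :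
    RTo {z | z ∈ S ∧ RTo S z v} u v := by
  induction h using Relation.ReflTransGen.head_induction_on with
  | refl => exact RTo.refl v
  | head hac hcv ih =>
      rename_i a c
      exact RTo.trans
        (RTo.single ⟨hac.1, Relation.ReflTransGen.head hac hcv⟩ ⟨hac.2.1, hcv⟩ hac.2.2) ih

lemma key_lemma {n : ℕ} (σ : TriPartition n) (i : Fin 3) :
    ∀ m : ℕ, ∀ A : Set (ℤ × ℤ), A.ncard ≤ m → A.Nonempty → A ⊆ σ.P i → ConnSet A →
    ∀ p ∈ σ.P i, p ∉ A → (∃ a ∈ A, TriLattice.Adj p a) →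
    (∀ a ∈ A, ∀ b ∈ Tset n, TriLattice.Adj a b → b ∈ σ.P i → b ∈ A ∨ b = p) →
    ConnSet (σ.P i \ A) →
    ∃ x ∈ A, Exposed σ i x ∧ SimplyConn (σ.P i \ {x}) := by
  have hPT := part_subset_tset σ i
  intro m
  induction m with
  | zero =>
      intro A hcard hne hAP _ _ _ _ _ _ _
      have hfin : A.Finite := (tset_finite n).subset (fun z hz => hPT (hAP hz))
      have := (Set.ncard_pos hfin).mpr hne
      omega
  | succ m ih =>
      intro A hcard hne hAP hAconn p hpP hpA hadj hcl hPAconn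
      have hAfin : A.Finite := (tset_finite n).subset (fun z hz => hPT (hAP hz))
      -- choose q in another district
      obtain ⟨j, hji⟩ : ∃ j : Fin 3, j ≠ i := by
        have : ∀ i : Fin 3, ∃ j : Fin 3, j ≠ i := by decide
        exact this i
      obtain ⟨q, hqj⟩ := part_nonempty σ j
      have hqT : q ∈ Tset n := part_subset_tset σ j hqj
      have hqP : q ∉ σ.P i := fun h => (σ.disj j i hji).ne_of_mem hqj h rfl
      -- Step 1: find an exposed vertex of A
      obtain ⟨x, hxA, b, hbT, hxb, hbP⟩ :=
        expose_exists hPT hAP hpP hpA hadj (fun a ha b hb hab hbP => hcl a ha b hb hab hbP)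
          hqT hqP
      have hxP : x ∈ σ.P i := hAP hxA
      have hexp : Exposed σ i x := ⟨hxP, b, hbT, hxb, hbP⟩
      by_cases hconn : ConnSet (σ.P i \ {x})
      · -- the complement is also connected
        refine ⟨x, hxA, hexp, hconn, ?_⟩
        have hceq : (σ.P i \ {x})ᶜ = (σ.P i)ᶜ ∪ {x} := by
          ext z
          by_cases hz : z = x <;> simp [hz, hxP]
        rw [hceq]
        exact connSet_union_singleton (σ.sc i).2 (hbP : b ∈ (σ.P i)ᶜ) hxb.symm
      · -- recurse into a component C of P i minus x not containing p
        have hpx : p ≠ x := fun h => hpA (h ▸ hxA)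
        have hpPx : p ∈ σ.P i \ {x} := ⟨hpP, hpx⟩
        have hnotall : ¬ ∀ u ∈ σ.P i \ {x}, RTo (σ.P i \ {x}) u p := fun hall =>
          hconn (connSet_of_hub hpPx hall)
        push_neg at hnotall
        obtain ⟨u0, hu0, hu0p⟩ := hnotall
        set C : Set (ℤ × ℤ) := {z | z ∈ σ.P i \ {x} ∧ RTo (σ.P i \ {x}) z u0} with hC_def
        have hCne : C.Nonempty := ⟨u0, hu0, RTo.refl u0⟩
        have hCsub : C ⊆ σ.P i \ {x} := fun z hz => hz.1
        have hxC : x ∉ C := fun h => (hCsub h).2 rfl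
        have hCconn : ConnSet C := by
          refine connSet_of_hub (h0 := u0) ⟨hu0, RTo.refl u0⟩ ?_
          intro z hz
          exact rto_restrict hz.2
        have hCA : C ⊆ A := by
          intro z hz
          by_contra hzA
          have hzPA : z ∈ σ.P i \ A := ⟨hz.1.1, hzA⟩
          have hpPA : p ∈ σ.P i \ A := ⟨hpP, hpA⟩
          have h1 : RTo (σ.P i \ A) z p :=
            (connSet_iff.mp hPAconn).2 z hzPA p hpPA
          have hsub2 : σ.P i \ A ⊆ σ.P i \ {x} := fun w hw =>
            ⟨hw.1, fun he => hw.2 (he ▸ hxA)⟩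
          exact hu0p (RTo.trans (RTo.symm hz.2) (RTo.mono hsub2 h1))
        have hCcl : ∀ a ∈ C, ∀ b ∈ Tset n, TriLattice.Adj a b → b ∈ σ.P i →
            b ∈ C ∨ b = x := by
          intro a ha b _ hab hbPi
          by_cases hbx : b = x
          · exact Or.inr hbx
          · exact Or.inl ⟨⟨hbPi, hbx⟩,
              RTo.trans (RTo.single ⟨hbPi, hbx⟩ ha.1 hab.symm) ha.2⟩
        -- x is adjacent to C
        have hadjC : ∃ a ∈ C, TriLattice.Adj x a := by
          have h1 : RTo (σ.P i) u0 x := (connSet_iff.mp (σ.sc i).1).2 u0 hu0.1 x hxP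
          obtain ⟨a, haC, b', hb'P, hb'C, hab'⟩ :=
            reach_cross h1 (⟨hu0, RTo.refl u0⟩ : u0 ∈ C) hxC
          rcases hCcl a haC b' (hPT hb'P) hab' hb'P with h | h
          · exact absurd h hb'C
          · exact ⟨a, haC, h ▸ hab'.symm⟩
        -- P i minus C is connected
        have hPCconn : ConnSet (σ.P i \ C) := by
          refine connSet_of_hub (h0 := x) ⟨hxP, hxC⟩ ?_
          intro u hu
          by_cases hux : u = x
          · rw [hux]; exact RTo.refl x
          · have h1 : RTo (σ.P i) u x := (connSet_iff.mp (σ.sc i).1).2 u hu.1 x hxP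
            exact reach_avoid h1 hu.2
              (fun a ha b hb hab => hCcl a ha b (hPT hb) hab hb)
        -- cardinality decreases
        have hCcard : C.ncard ≤ m := by
          have h1 : C ⊆ A \ {x} := fun z hz => ⟨hCA hz, fun he => hxC (he ▸ hz)⟩
          have h2 : C.ncard ≤ (A \ {x}).ncard :=
            Set.ncard_le_ncard h1 (hAfin.subset Set.diff_subset)
          have h3 : (A \ {x}).ncard = A.ncard - 1 :=
            Set.ncard_diff_singleton_of_mem hxA
          have h4 : 1 ≤ A.ncard := (Set.ncard_pos hAfin).mpr hne
          omega
        obtain ⟨x', hx'C, hres⟩ := ih C hCcard hCne (hCA.trans hAP) hCconn x hxP hxC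
          hadjC hCcl hPCconn
        exact ⟨x', hCA hx'C, hres⟩




/-- Lemma 3.9: if `w ∈ P_i` is a cut vertex of `P_i`, then every connected component `S`
of `P_i \ {w}` contains an exposed vertex `x` such that `P_i \ {x}` is simply connected. -/
theorem cut_vertex_component_has_removable (n : ℕ) (σ : TriPartition n) (i : Fin 3)
    (w : ℤ × ℤ) (hw : w ∈ σ.P i) (hcut : ¬ ConnSet (σ.P i \ {w}))
    (S : Set (ℤ × ℤ)) (hS : IsCompOf S (σ.P i \ {w})) :
    ∃ x ∈ S, Exposed σ i x ∧ SimplyConn (σ.P i \ {x}) := by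
  have hPT := part_subset_tset σ i
  obtain ⟨hSne, hSsub, hSconn, hSmax⟩ := hS
  have hSP : S ⊆ σ.P i := hSsub.trans Set.diff_subset
  have hwS : w ∉ S := fun h => (hSsub h).2 rfl
  have hcl : ∀ a ∈ S, ∀ b ∈ Tset n, TriLattice.Adj a b → b ∈ σ.P i →
      b ∈ S ∨ b = w := by
    intro a ha b _ hab hbP
    by_cases hbw : b = w
    · exact Or.inr hbw
    · left
      have hconn2 : ConnSet (S ∪ {b}) := connSet_union_singleton hSconn ha hab
      have hsub2 : S ∪ {b} ⊆ σ.P i \ {w} := by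
        rintro z (hz | hz)
        · exact hSsub hz
        · cases hz; exact ⟨hbP, hbw⟩
      have := hSmax (S ∪ {b}) Set.subset_union_left hsub2 hconn2
      rw [← this]
      exact Or.inr rfl
  have hadjS : ∃ a ∈ S, TriLattice.Adj w a := by
    obtain ⟨s0, hs0⟩ := hSne
    have h1 : RTo (σ.P i) s0 w := (connSet_iff.mp (σ.sc i).1).2 s0 (hSP hs0) w hw
    obtain ⟨a, haS, b, hbP, hbS, hab⟩ := reach_cross h1 hs0 hwS
    rcases hcl a haS b (hPT hbP) hab hbP with h | h
    · exact absurd h hbS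
    · exact ⟨a, haS, (h ▸ hab).symm⟩
  have hPSconn : ConnSet (σ.P i \ S) := by
    refine connSet_of_hub (h0 := w) ⟨hw, hwS⟩ ?_
    intro u hu
    by_cases huw : u = w
    · rw [huw]; exact RTo.refl w
    · have h1 : RTo (σ.P i) u w := (connSet_iff.mp (σ.sc i).1).2 u hu.1 w hw
      exact reach_avoid h1 hu.2 (fun a ha b hb hab => hcl a ha b (hPT hb) hab hb)
  exact key_lemma σ i S.ncard S le_rfl hSne hSP hSconn w hw hwS hadjS hcl hPSconn



end Redistrict
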